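/- arXiv:1602.04602 — 2 statements merged into one kernel-verified Lean document; each statement's English description precedes it below -/
import Mathlib

section
/- Let φ be an invertible linear operator on a finite-dimensional complex vector space U, and let T : U → U be an involution (T² = Id) anticommuting with φ (Tφ = -φT). Let W⁺ and W⁻ be the +1 and -1 eigenspaces of T. If every eigenvalue of φ² has multiplicity exactly two, then the restriction of φ² to W⁺ has only simple eigenvalues, and likewise for W⁻. -/
open Module

/-- If `φ` is an invertible operator anticommuting with an involution `T`, and every
eigenvalue of `φ²` has multiplicity exactly two, then the restriction of `φ²` to each
of the `±1`-eigenspaces `W⁺`, `W⁻` of `T` has only simple eigenvalues. -/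
theorem stmt5 {U : Type*} [AddCommGroup U] [Module ℂ U] [FiniteDimensional ℂ U]
    (φ T : Module.End ℂ U) (hφ : IsUnit φ)
    (hT : T * T = 1) (hanti : T * φ = -(φ * T))
    (hdiag : (⨆ μ : ℂ, Module.End.eigenspace (φ ^ 2) μ) = ⊤)
    (hmult : ∀ μ : ℂ, μ ∈ spectrum ℂ (φ ^ 2) →
      Module.finrank ℂ (Module.End.eigenspace (φ ^ 2) μ) = 2) :
    (∀ μ : ℂ, Module.finrank ℂ
        (Module.End.eigenspace (φ ^ 2) μ ⊓ Module.End.eigenspace T 1 : Submodule ℂ U) ≤ 1) ∧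
    (∀ μ : ℂ, Module.finrank ℂ
        (Module.End.eigenspace (φ ^ 2) μ ⊓ Module.End.eigenspace T (-1) : Submodule ℂ U) ≤ 1) := by
  -- φ is injective
  have hinj : ∀ x : U, φ x = 0 → x = 0 := by
    obtain ⟨ψ, hψ⟩ := hφ.exists_left_inv
    intro x hx
    have : (ψ * φ) x = x := by rw [hψ]; rfl
    rw [Module.End.mul_apply, hx, map_zero] at this
    exact this.symm
  have key : ∀ ε : ℂ, ε ≠ 0 → ∀ μ : ℂ, Module.finrank ℂ
      (Module.End.eigenspace (φ ^ 2) μ ⊓ Module.End.eigenspace T ε : Submodule ℂ U) ≤ 1 := by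
    intro ε hε μ
    by_contra hlt
    push_neg at hlt
    set E := Module.End.eigenspace (φ ^ 2) μ with hEdef
    set S := (E ⊓ Module.End.eigenspace T ε : Submodule ℂ U) with hSdef
    have h2 : 2 ≤ Module.finrank ℂ S := hlt
    -- eigenspace has finrank ≤ 2
    have hE2 : Module.finrank ℂ E ≤ 2 := by
      by_cases hsp : μ ∈ spectrum ℂ (φ ^ 2)
      · exact le_of_eq (hmult μ hsp)
      · have : ¬ Module.End.HasEigenvalue (φ ^ 2) μ := by
          rw [Module.End.hasEigenvalue_iff_mem_spectrum]
          exact hsp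
        have hbot : E = ⊥ := by
          by_contra hne
          exact this (Module.End.hasEigenvalue_iff.mpr hne)
        rw [hbot]
        simp [finrank_bot]
    -- S = E, so E ≤ eigenspace T ε
    have hSE : S = E :=
      Submodule.eq_of_le_of_finrank_le inf_le_left (hE2.trans h2)
    have hEW : E ≤ Module.End.eigenspace T ε := hSE ▸ inf_le_right
    -- pick a nonzero vector in S
    have hSne : S ≠ ⊥ := by
      intro hb
      rw [hb] at h2
      simp [finrank_bot] at h2
    obtain ⟨v, hvS, hv0⟩ := Submodule.exists_mem_ne_zero_of_ne_bot hSne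
    have hvE : v ∈ E := hSE ▸ hvS
    have hvW : T v = ε • v := Module.End.mem_eigenspace_iff.mp (hEW hvE)
    -- φ v ∈ E
    have hφvE : φ v ∈ E := by
      rw [hEdef, Module.End.mem_eigenspace_iff]
      have hcomm : φ ^ 2 * φ = φ * φ ^ 2 := by
        rw [← pow_succ, pow_succ']
      calc (φ ^ 2) (φ v) = (φ ^ 2 * φ) v := rfl
        _ = (φ * φ ^ 2) v := by rw [hcomm]
        _ = φ ((φ ^ 2) v) := rfl
        _ = φ (μ • v) := by rw [Module.End.mem_eigenspace_iff.mp hvE]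
        _ = μ • φ v := map_smul φ μ v
    -- T (φ v) = -ε • φ v
    have hT1 : T (φ v) = (-ε) • φ v := by
      have h := LinearMap.ext_iff.mp hanti v
      rw [Module.End.mul_apply] at h
      rw [h, LinearMap.neg_apply, Module.End.mul_apply, hvW, map_smul, ← neg_smul]
    -- but also T (φ v) = ε • φ v
    have hT2 : T (φ v) = ε • φ v := Module.End.mem_eigenspace_iff.mp (hEW hφvE)
    have : (ε + ε) • φ v = 0 := by
      have : ε • φ v + ε • φ v = 0 := by
        rw [← hT2]
        nth_rewrite 2 [hT1]
        rw [neg_smul, ← hT2]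
        abel
      rw [add_smul]
      exact this
    have hφv0 : φ v = 0 := by
      have hne : ε + ε ≠ 0 := by
        intro h
        apply hε
        have : (2 : ℂ) * ε = 0 := by ring_nf; linear_combination h
        exact (mul_eq_zero.mp this).resolve_left (by norm_num)
      exact (smul_eq_zero.mp this).resolve_left hne
    exact hv0 (hinj v hφv0)
  exact ⟨key 1 one_ne_zero, key (-1) (by norm_num)⟩
end

section
/- For the irreducible SU(2)-representation V_m on homogeneous polynomials of degree m, the Casimir-type operator -((ρ_*)(H)² + (ρ_*)(A)² + (ρ_*)(B)²) equals m(m+2)·Id, where H = [[i,0],[0,-i]], A = [[0,i],[i,0]], B = [[0,-1],[1,0]] ∈ su(2). -/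
open MvPolynomial

lemma Xmul (i : Fin 2) (d : Fin 2 →₀ ℕ) (c : ℂ) :
    X i * pderiv i (monomial d c) = ((d i : ℂ)) • monomial d c := by
  rw [pderiv_monomial]
  rcases Nat.eq_zero_or_pos (d i) with h | h
  · simp [h]
  · rw [X, monomial_mul, one_mul, add_tsub_cancel_of_le (by
      rwa [Finsupp.single_le_iff]), smul_monomial]
    rw [smul_eq_mul, mul_comm]

lemma euler {n : ℕ} {q : MvPolynomial (Fin 2) ℂ} (hq : q.IsHomogeneous n) :
    X 0 * pderiv 0 q + X 1 * pderiv 1 q = (n : ℂ) • q := by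
  conv_lhs => rw [q.as_sum]
  rw [map_sum, map_sum, Finset.mul_sum, Finset.mul_sum, ← Finset.sum_add_distrib]
  conv_rhs => rw [q.as_sum, Finset.smul_sum]
  refine Finset.sum_congr rfl fun d hd => ?_
  rw [Xmul, Xmul, ← add_smul]
  have hdeg : d 0 + d 1 = n := by
    have := hq (mem_support_iff.mp hd)
    simpa [Finsupp.weight, Finsupp.linearCombination, Finsupp.sum_fintype,
      Fin.sum_univ_two] using this
  rw [← hdeg]
  push_cast
  ring_nf

lemma deg2 (d : Fin 2 →₀ ℕ) : d.degree = d 0 + d 1 := by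
  rw [Finsupp.degree_apply, Finset.sum_subset (Finset.subset_univ _)
    (fun i _ hi => Finsupp.notMem_support_iff.mp hi), Fin.sum_univ_two]

lemma pderiv_comm' (i j : Fin 2) (q : MvPolynomial (Fin 2) ℂ) :
    pderiv i (pderiv j q) = pderiv j (pderiv i q) := by
  rcases eq_or_ne i j with rfl | hij
  · rfl
  induction q using MvPolynomial.induction_on' with
  | add p q hp hq => simp [hp, hq]
  | monomial d c =>
    simp only [pderiv_monomial]
    rw [Finsupp.tsub_apply, Finsupp.tsub_apply]
    rw [Finsupp.single_apply, Finsupp.single_apply]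
    rw [if_neg hij, if_neg (Ne.symm hij)]
    simp only [Nat.sub_zero]
    rw [tsub_right_comm]
    ring_nf

lemma pderiv_isHomog {n : ℕ} {q : MvPolynomial (Fin 2) ℂ} (hq : q.IsHomogeneous n) (j : Fin 2) :
    (pderiv j q).IsHomogeneous (n - 1) := by
  have h : pderiv j q = ∑ d ∈ q.support, pderiv j (monomial d (coeff d q)) := by
    conv_lhs => rw [q.as_sum]
    rw [map_sum]
  rw [h]
  apply IsHomogeneous.sum
  intro d hd
  rw [pderiv_monomial]
  rcases Nat.eq_zero_or_pos (d j) with h0 | h0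
  · simp [h0, isHomogeneous_zero]
  · apply isHomogeneous_monomial
    have hdeg : d 0 + d 1 = n := by
      have := hq (mem_support_iff.mp hd)
      simpa [Finsupp.weight, Finsupp.linearCombination, Finsupp.sum_fintype,
        Fin.sum_univ_two] using this
    rw [deg2]
    rw [Finsupp.tsub_apply, Finsupp.tsub_apply, Finsupp.single_apply, Finsupp.single_apply]
    fin_cases j <;> simp_all <;> omega

/-- The derived action of a matrix `X` in the Lie algebra `su(2) ⊂ M₂(ℂ)` on complex
polynomials in two variables `z₁, z₂` induced by the right action
`(ρ(x)v)(z) = v(z·x)`: explicitly `(ρ_* X) = (X₀₀z₁ + X₁₀z₂)∂₁ + (X₀₁z₁ + X₁₁z₂)∂₂`. -/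
noncomputable def act (M : Matrix (Fin 2) (Fin 2) ℂ)
    (p : MvPolynomial (Fin 2) ℂ) : MvPolynomial (Fin 2) ℂ :=
  (C (M 0 0) * X 0 + C (M 1 0) * X 1) * pderiv 0 p
    + (C (M 0 1) * X 0 + C (M 1 1) * X 1) * pderiv 1 p

/-- On the space `V_m` of homogeneous polynomials of degree `m`, the Casimir-type
operator `-(ρ_*(H)² + ρ_*(A)² + ρ_*(B)²)` acts as the scalar `m(m+2)`, where
`H = [[i,0],[0,-i]]`, `A = [[0,i],[i,0]]`, `B = [[0,-1],[1,0]]`. -/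
theorem stmt13 (m : ℕ) (p : MvPolynomial (Fin 2) ℂ) (hp : p.IsHomogeneous m)
    (H A B : Matrix (Fin 2) (Fin 2) ℂ)
    (hH : H = !![Complex.I, 0; 0, -Complex.I])
    (hA : A = !![0, Complex.I; Complex.I, 0])
    (hB : B = !![0, -1; 1, 0]) :
    -(act H (act H p) + act A (act A p) + act B (act B p))
      = ((m * (m + 2) : ℕ) : ℂ) • p := by
  subst hH hA hB
  have hH' : ∀ q : MvPolynomial (Fin 2) ℂ, act !![Complex.I, 0; 0, -Complex.I] q
      = C Complex.I * (X 0 * pderiv 0 q) - C Complex.I * (X 1 * pderiv 1 q) := by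
    intro q
    simp only [act, Matrix.cons_val', Matrix.cons_val_zero, Matrix.cons_val_one, Matrix.head_cons,
      Matrix.empty_val', Matrix.cons_val_fin_one, Matrix.head_fin_const, Matrix.of_apply,
      map_zero, map_neg, zero_mul, add_zero, zero_add, neg_mul]
    ring
  have hA' : ∀ q : MvPolynomial (Fin 2) ℂ, act !![0, Complex.I; Complex.I, 0] q
      = C Complex.I * (X 1 * pderiv 0 q) + C Complex.I * (X 0 * pderiv 1 q) := by
    intro q
    simp only [act, Matrix.cons_val', Matrix.cons_val_zero, Matrix.cons_val_one, Matrix.head_cons,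
      Matrix.empty_val', Matrix.cons_val_fin_one, Matrix.head_fin_const, Matrix.of_apply,
      map_zero, map_neg, zero_mul, add_zero, zero_add, neg_mul]
    ring
  have hB' : ∀ q : MvPolynomial (Fin 2) ℂ, act !![0, -1; 1, 0] q
      = X 1 * pderiv 0 q - X 0 * pderiv 1 q := by
    intro q
    simp only [act, Matrix.cons_val', Matrix.cons_val_zero, Matrix.cons_val_one, Matrix.head_cons,
      Matrix.empty_val', Matrix.cons_val_fin_one, Matrix.head_fin_const, Matrix.of_apply,
      map_zero, map_neg, map_one, zero_mul, add_zero, zero_add, neg_mul, one_mul]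
    ring
  have hx01 : pderiv 0 (X 1 : MvPolynomial (Fin 2) ℂ) = 0 := pderiv_X_of_ne (by decide)
  have hx10 : pderiv 1 (X 0 : MvPolynomial (Fin 2) ℂ) = 0 := pderiv_X_of_ne (by decide)
  rw [hH' (act _ p), hH' p, hA' (act _ p), hA' p, hB' (act _ p), hB' p]
  simp only [map_sub, map_add, pderiv_C_mul, pderiv_mul, pderiv_X_self, pderiv_C, hx01, hx10,
    zero_mul, mul_zero, add_zero, zero_add, one_mul, mul_one, sub_zero, zero_sub]
  have h0 := pderiv_isHomog hp 0
  have h1 := pderiv_isHomog hp 1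
  have e0 := euler hp
  have e1 := euler h0
  have e2 := euler h1
  have hc := pderiv_comm' 1 0 p
  have hI2 : (C Complex.I : MvPolynomial (Fin 2) ℂ) ^ 2 = -1 := by
    rw [← map_pow, Complex.I_sq, map_neg, map_one]
  have key : ((m * (m + 2) : ℕ) : ℂ) = 3 * (m : ℂ) + ((m - 1 : ℕ) : ℂ) * (m : ℂ) := by
    cases m with
    | zero => simp
    | succ n => push_cast [Nat.succ_sub_one]; ring
  simp only [smul_eq_C_mul] at e0 e1 e2 ⊢
  rw [key, map_add, map_mul, map_mul, map_ofNat]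
  rw [hc] at e1 ⊢
  ring_nf
  simp only [hI2]
  linear_combination (3 + C ((m - 1 : ℕ) : ℂ)) * e0 + X 0 * e1 + X 1 * e2
end
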